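/- If prover cannot force infinite plays, refuter can force termination with a decreasing measure: define the attractor level of a non-terminal X to be the least i such that the i-th Kleene approximant σ^i(X) is not equivalent to false (∞ if none exists), level 0 for terminals, and for a sentential form β define level(β) = Σ_j |G|^{(attractor level of β_j)}, where |G| bounds the length of any rule's right-hand side plus one. Then from any position wXβ with σ(wXβ) ≢ false: if X is owned by prover, every rule X → η yields level(wηβ) < level(wXβ); if X is owned by refuter, some rule X → η yields level(wηβ) < level(wXβ). Hence refuter has a strategy ensuring all conforming plays are finite. -/

import Mathlib

/-- Negation-free Boolean formulas over atomic propositions (boxes) `B`,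
with a distinguished formula `fls` (false). -/
inductive Formula (B : Type) : Type where
  | fls : Formula B
  | box : B → Formula B
  | and : Formula B → Formula B → Formula B
  | or : Formula B → Formula B → Formula B

namespace Formula

variable {B : Type}

/-- Satisfaction under a truth assignment to the boxes. -/
def sat (ν : B → Prop) : Formula B → Prop
  | fls => False
  | box b => ν b
  | and F G => F.sat ν ∧ G.sat ν
  | or F G => F.sat ν ∨ G.sat ν

/-- Logical equivalence of formulas. -/
def Equiv (F G : Formula B) : Prop := ∀ ν : B → Prop, F.sat ν ↔ G.sat ν

/-- Composition of a box with a formula. -/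
def boxSeq [Mul B] (r : B) : Formula B → Formula B
  | fls => fls
  | box t => box (r * t)
  | and G1 G2 => and (boxSeq r G1) (boxSeq r G2)
  | or G1 G2 => or (boxSeq r G1) (boxSeq r G2)

/-- Relational composition of formulas: `false;G = F;false = false`, it
distributes over `∧`/`∨` on the left, and boxes distribute over `∧`/`∨`. -/
def seq [Mul B] : Formula B → Formula B → Formula B
  | fls, _ => fls
  | box r, G => boxSeq r G
  | and F1 F2, G => and (F1.seq G) (F2.seq G)
  | or F1 F2, G => or (F1.seq G) (F2.seq G)

end Formula

/-- A context-free grammar with an ownership partitioning of the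
non-terminals (`prover X = true` iff `X` is owned by prover); every
non-terminal has at least one rule. -/
structure GameGrammar (N T : Type) where
  prover : N → Bool
  rules : N → List (List (N ⊕ T))
  rules_nonempty : ∀ X, rules X ≠ []

/-- Sentential forms: words over non-terminals and terminals. -/
abbrev SF (N T : Type) := List (N ⊕ T)

variable {N T B : Type}

/-- Interpretation of a sentential form under an assignment `σ` of formulas
to non-terminals: `ε ↦ id`, terminals `a ↦ ⟦a⟧`, concatenation ↦ relational
composition. -/
def interpSF [Mul B] [One B] (boxT : T → B) (σ : N → Formula B) : SF N T → Formula B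
  | [] => Formula.box 1
  | (Sum.inl X) :: rest => (σ X).seq (interpSF boxT σ rest)
  | (Sum.inr a) :: rest => (Formula.box (boxT a)).seq (interpSF boxT σ rest)

/-- Combine a (nonempty) list of formulas by conjunction (`isAnd = true`) or
disjunction. -/
def combineList (isAnd : Bool) : List (Formula B) → Formula B
  | [] => Formula.fls
  | F :: rest =>
      rest.foldl (fun acc G => if isAnd then Formula.and acc G else Formula.or acc G) F

/-- One application of the system of equations: the right-hand side for `X` is
the conjunction (if prover owns `X`) or disjunction (if refuter owns `X`) of
the interpretations of the right-hand sides of `X`'s rules. -/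
def eqStep [Mul B] [One B] (G : GameGrammar N T) (boxT : T → B)
    (σ : N → Formula B) : N → Formula B :=
  fun X => combineList (G.prover X) ((G.rules X).map (interpSF boxT σ))

/-- The `i`-th Kleene approximant, starting from `false` everywhere. -/
def approx [Mul B] [One B] (G : GameGrammar N T) (boxT : T → B) : ℕ → N → Formula B
  | 0 => fun _ => Formula.fls
  | i + 1 => eqStep G boxT (approx G boxT i)

/-- A sentential form is a terminal word. -/
def IsTerminalSF (α : SF N T) : Prop := ∀ s ∈ α, ∃ a : T, s = Sum.inr a

/-- The left-derivation relation: replace the leftmost non-terminal using a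
rule of the grammar. -/
def Derives (G : GameGrammar N T) (α β : SF N T) : Prop :=
  ∃ (w : List T) (X : N) (η : List (N ⊕ T)) (γ : SF N T),
    α = w.map Sum.inr ++ Sum.inl X :: γ ∧ η ∈ G.rules X ∧
    β = w.map Sum.inr ++ (η ++ γ)

/-- It is prover's turn: the leftmost non-terminal is owned by prover. -/
def ProverTurn (G : GameGrammar N T) (α : SF N T) : Prop :=
  ∃ (w : List T) (X : N) (γ : SF N T),
    α = w.map Sum.inr ++ Sum.inl X :: γ ∧ G.prover X = true

/-- A finite play from `α`: a nonempty sequence of positions starting in `α`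
and linked by left-derivation steps. -/
def IsPlay (G : GameGrammar N T) (α : SF N T) (p : List (SF N T)) : Prop :=
  p.head? = some α ∧ p.Chain' (Derives G)

/-- A finite play conforms to the strategy `s` of the player whose turns are
described by `turn`: whenever it is that player's turn, the next position is
the one returned by the strategy. -/
def Conforms (turn : SF N T → Prop) (s : List (SF N T) → SF N T)
    (p : List (SF N T)) : Prop :=
  ∀ (i : ℕ) (h : i + 1 < p.length),
    turn (p.get ⟨i, Nat.lt_of_succ_lt h⟩) →
    p.get ⟨i + 1, h⟩ = s (p.take (i + 1))

/-- The attractor level of a non-terminal: the least `i` such that the `i`-th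
Kleene approximant of `X` is not equivalent to `false`. -/
noncomputable def attrLevel [Mul B] [One B] (G : GameGrammar N T) (boxT : T → B)
    (X : N) : ℕ :=
  sInf {i : ℕ | ¬ Formula.Equiv (approx G boxT i X) Formula.fls}

/-- The level of a symbol: the attractor level for non-terminals, `0` for
terminals. -/
noncomputable def symLevel [Mul B] [One B] (G : GameGrammar N T) (boxT : T → B) :
    N ⊕ T → ℕ
  | Sum.inl X => attrLevel G boxT X
  | Sum.inr _ => 0

/-- The level of a sentential form: `level(β) = Σ_j c^(level of β_j)`. -/
noncomputable def sfLevel [Mul B] [One B] (G : GameGrammar N T) (boxT : T → B)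
    (c : ℕ) (β : SF N T) : ℕ :=
  (β.map fun s => c ^ symLevel G boxT s).sum

section Aux

open Formula

variable {N T B : Type}

/-- `ok F` means `F` is satisfied under the all-true assignment. -/
def ok {B : Type} (F : Formula B) : Prop := F.sat (fun _ => True)

lemma sat_mono {ν ν' : B → Prop} (h : ∀ b, ν b → ν' b) :
    ∀ F : Formula B, F.sat ν → F.sat ν'
  | .fls, h' => h'
  | .box _, h' => h _ h'
  | .and F G, ⟨h1, h2⟩ => ⟨sat_mono h F h1, sat_mono h G h2⟩
  | .or F G, h' => h'.imp (sat_mono h F) (sat_mono h G)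

lemma not_equiv_fls {F : Formula B} : ¬ F.Equiv .fls ↔ ok F := by
  constructor
  · intro h; by_contra hok
    exact h fun ν => ⟨fun hs => hok (sat_mono (fun _ _ => trivial) F hs), False.elim⟩
  · intro hok h; exact (h _).mp hok

lemma ok_and {F G : Formula B} : ok (F.and G) ↔ ok F ∧ ok G := Iff.rfl
lemma ok_or {F G : Formula B} : ok (F.or G) ↔ ok F ∨ ok G := Iff.rfl
lemma not_ok_fls : ¬ ok (Formula.fls : Formula B) := id

lemma ok_boxSeq [Mul B] (r : B) : ∀ F : Formula B, ok (Formula.boxSeq r F) ↔ ok F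
  | .fls => Iff.rfl
  | .box _ => Iff.rfl
  | .and F G => and_congr (ok_boxSeq r F) (ok_boxSeq r G)
  | .or F G => or_congr (ok_boxSeq r F) (ok_boxSeq r G)

lemma ok_seq [Mul B] (F G : Formula B) : ok (F.seq G) ↔ ok F ∧ ok G := by
  induction F with
  | fls => exact iff_of_false id fun h => h.1
  | box r => exact ⟨fun h => ⟨trivial, (ok_boxSeq r G).mp h⟩, fun h => (ok_boxSeq r G).mpr h.2⟩
  | and F1 F2 ih1 ih2 =>
    show ok ((F1.seq G).and (F2.seq G)) ↔ ok (F1.and F2) ∧ ok G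
    rw [ok_and, ok_and, ih1, ih2]; tauto
  | or F1 F2 ih1 ih2 =>
    show ok ((F1.seq G).or (F2.seq G)) ↔ ok (F1.or F2) ∧ ok G
    rw [ok_or, ok_or, ih1, ih2]; tauto

lemma ok_foldl_and (L : List (Formula B)) :
    ∀ F, ok (L.foldl (fun acc G => Formula.and acc G) F) ↔ ok F ∧ ∀ G ∈ L, ok G := by
  induction L with
  | nil => simp
  | cons H L ih => intro F; simp [ih, ok_and, and_assoc]

lemma ok_foldl_or (L : List (Formula B)) :
    ∀ F, ok (L.foldl (fun acc G => Formula.or acc G) F) ↔ ok F ∨ ∃ G ∈ L, ok G := by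
  induction L with
  | nil => simp
  | cons H L ih => intro F; simp [ih, ok_or, or_assoc]

lemma ok_combine_true (L : List (Formula B)) (h : L ≠ []) :
    ok (combineList true L) ↔ ∀ F ∈ L, ok F := by
  cases L with
  | nil => exact absurd rfl h
  | cons F rest =>
    show ok (rest.foldl (fun acc G => Formula.and acc G) F) ↔ _
    rw [ok_foldl_and]; simp

lemma ok_combine_false (L : List (Formula B)) :
    ok (combineList false L) ↔ ∃ F ∈ L, ok F := by
  cases L with
  | nil => simpa [combineList] using not_ok_fls
  | cons F rest =>
    show ok (rest.foldl (fun acc G => Formula.or acc G) F) ↔ _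
    rw [ok_foldl_or]; simp

end Aux
section Aux2

variable {N T B : Type} [Mul B] [One B]

lemma ok_interp (boxT : T → B) (σ : N → Formula B) :
    ∀ β : SF N T, ok (interpSF boxT σ β) ↔ ∀ X, Sum.inl X ∈ β → ok (σ X)
  | [] => by simp [interpSF, ok, Formula.sat]
  | Sum.inl X :: rest => by
      rw [show interpSF boxT σ (Sum.inl X :: rest) = (σ X).seq (interpSF boxT σ rest) from rfl,
        ok_seq, ok_interp boxT σ rest]
      constructor
      · rintro ⟨h1, h2⟩ Y hY
        rcases List.mem_cons.mp hY with h | h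
        · exact (Sum.inl.inj h) ▸ h1
        · exact h2 Y h
      · intro h
        exact ⟨h X (List.mem_cons_self), fun Y hY => h Y (List.mem_cons_of_mem _ hY)⟩
  | Sum.inr a :: rest => by
      rw [show interpSF boxT σ (Sum.inr a :: rest) = (Formula.box (boxT a)).seq (interpSF boxT σ rest) from rfl,
        ok_seq, ok_interp boxT σ rest]
      constructor
      · rintro ⟨_, h2⟩ Y hY
        rcases List.mem_cons.mp hY with h | h
        · exact absurd h (by simp)
        · exact h2 Y h
      · intro h
        exact ⟨trivial, fun Y hY => h Y (List.mem_cons_of_mem _ hY)⟩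

variable (G : GameGrammar N T) (boxT : T → B)

lemma approx_mono_ok : ∀ i, ∀ X : N, ok (approx G boxT i X) → ok (approx G boxT (i + 1) X) := by
  intro i
  induction i with
  | zero => intro X h; exact absurd h not_ok_fls
  | succ i ih =>
    intro X h
    show ok (eqStep G boxT (approx G boxT (i + 1)) X)
    have h' : ok (eqStep G boxT (approx G boxT i) X) := h
    unfold eqStep at h' ⊢
    cases hp : G.prover X with
    | true =>
      rw [hp] at h'
      rw [ok_combine_true _ (by simp [G.rules_nonempty X])] at h' ⊢
      intro F hF
      rcases List.mem_map.mp hF with ⟨η, hη, rfl⟩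
      rw [ok_interp]
      intro Y hY
      exact ih Y (((ok_interp boxT _ η).mp (h' _ (List.mem_map_of_mem hη))) Y hY)
    | false =>
      rw [hp] at h'
      rw [ok_combine_false] at h' ⊢
      rcases h' with ⟨F, hF, hok⟩
      rcases List.mem_map.mp hF with ⟨η, hη, rfl⟩
      refine ⟨_, List.mem_map_of_mem hη, ?_⟩
      rw [ok_interp]
      intro Y hY
      exact ih Y (((ok_interp boxT _ η).mp hok) Y hY)

lemma approx_le_ok {i j : ℕ} (hij : i ≤ j) (X : N) (h : ok (approx G boxT i X)) :
    ok (approx G boxT j X) := by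
  induction hij with
  | refl => exact h
  | step _ ih => exact approx_mono_ok G boxT _ _ ih

lemma attr_set_eq (X : N) :
    {i : ℕ | ¬ Formula.Equiv (approx G boxT i X) Formula.fls}
      = {i : ℕ | ok (approx G boxT i X)} := by
  ext i; exact not_equiv_fls

lemma attr_facts {k : ℕ} {X : N} (hX : ok (approx G boxT k X)) :
    ok (approx G boxT (attrLevel G boxT X) X) ∧ attrLevel G boxT X ≤ k ∧
      1 ≤ attrLevel G boxT X := by
  have hset := attr_set_eq G boxT X
  have hne : k ∈ {i : ℕ | ok (approx G boxT i X)} := hX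
  have h1 : ok (approx G boxT (attrLevel G boxT X) X) := by
    have := Nat.sInf_mem (s := {i : ℕ | ok (approx G boxT i X)}) ⟨k, hne⟩
    simpa [attrLevel, hset] using this
  refine ⟨h1, ?_, ?_⟩
  · rw [attrLevel, hset]; exact Nat.sInf_le hne
  · by_contra h
    have h0 : attrLevel G boxT X = 0 := by omega
    rw [h0] at h1
    exact not_ok_fls h1

lemma attrLevel_le {j : ℕ} {X : N} (h : ok (approx G boxT j X)) :
    attrLevel G boxT X ≤ j := by
  rw [attrLevel, attr_set_eq]; exact Nat.sInf_le h

end Aux2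
section Aux3

variable {N T B : Type} [Mul B] [One B] (G : GameGrammar N T) (boxT : T → B)

lemma sfLevel_append (c : ℕ) (a b : SF N T) :
    sfLevel G boxT c (a ++ b) = sfLevel G boxT c a + sfLevel G boxT c b := by
  simp [sfLevel]

lemma sfLevel_cons (c : ℕ) (s : N ⊕ T) (b : SF N T) :
    sfLevel G boxT c (s :: b) = c ^ symLevel G boxT s + sfLevel G boxT c b := by
  simp [sfLevel]

/-- The key lemma: if `X` is live at stage `i₀`, then (depending on owner) all
or some rules for `X` have right-hand sides whose non-terminals are live and
whose level is below `c ^ attrLevel X`. -/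
lemma key_lemma (c i₀ : ℕ)
    (hc : ∀ (X : N) (η : List (N ⊕ T)), η ∈ G.rules X → η.length < c)
    {X : N} (hX : ok (approx G boxT i₀ X)) :
    (G.prover X = true → ∀ η ∈ G.rules X,
      (∀ Y : N, Sum.inl Y ∈ η → ok (approx G boxT i₀ Y)) ∧
        sfLevel G boxT c η < c ^ attrLevel G boxT X) ∧
    (G.prover X = false → ∃ η ∈ G.rules X,
      (∀ Y : N, Sum.inl Y ∈ η → ok (approx G boxT i₀ Y)) ∧
        sfLevel G boxT c η < c ^ attrLevel G boxT X) := by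
  obtain ⟨hok, hle, hge⟩ := attr_facts G boxT hX
  set ℓ := attrLevel G boxT X with hℓ
  obtain ⟨m, hm⟩ : ∃ m, ℓ = m + 1 := ⟨ℓ - 1, by omega⟩
  have hc1 : 1 ≤ c := by
    obtain ⟨η₀, hη₀⟩ := List.exists_mem_of_ne_nil _ (G.rules_nonempty X)
    have := hc X η₀ hη₀; omega
  -- main step for a single rule
  have main : ∀ η ∈ G.rules X, ok (interpSF boxT (approx G boxT m) η) →
      (∀ Y : N, Sum.inl Y ∈ η → ok (approx G boxT i₀ Y)) ∧
        sfLevel G boxT c η < c ^ ℓ := by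
    intro η hη hokη
    rw [ok_interp] at hokη
    have hm_le : m ≤ i₀ := by omega
    refine ⟨fun Y hY => approx_le_ok G boxT hm_le Y (hokη Y hY), ?_⟩
    have hbound : ∀ s ∈ η, c ^ symLevel G boxT s ≤ c ^ m := by
      intro s hs
      apply Nat.pow_le_pow_right hc1
      cases s with
      | inl Y => exact attrLevel_le G boxT (hokη Y hs)
      | inr a => exact Nat.zero_le m
    calc sfLevel G boxT c η ≤ η.length * c ^ m := by
          have := List.sum_le_card_nsmul (η.map fun s => c ^ symLevel G boxT s) (c ^ m)
            (by intro x hx; rcases List.mem_map.mp hx with ⟨s, hs, rfl⟩; exact hbound s hs)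
          simpa [sfLevel, smul_eq_mul] using this
      _ < c * c ^ m := by
          exact Nat.mul_lt_mul_of_lt_of_le (hc X η hη) le_rfl (Nat.pow_pos hc1)
      _ = c ^ ℓ := by rw [hm, pow_succ]; ring
  rw [hm] at hok
  have hok' : ok (eqStep G boxT (approx G boxT m) X) := hok
  unfold eqStep at hok'
  constructor
  · intro hp η hη
    rw [hp, ok_combine_true _ (by simp [G.rules_nonempty X])] at hok'
    exact main η hη (hok' _ (List.mem_map_of_mem hη))
  · intro hp
    rw [hp, ok_combine_false] at hok'
    rcases hok' with ⟨F, hF, hokF⟩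
    rcases List.mem_map.mp hF with ⟨η, hη, rfl⟩
    exact ⟨η, hη, main η hη hokF⟩

lemma decomp_unique : ∀ (w w' : List T) (X X' : N) (γ γ' : SF N T),
    w.map Sum.inr ++ Sum.inl X :: γ = w'.map Sum.inr ++ Sum.inl X' :: γ' →
    w = w' ∧ X = X' ∧ γ = γ'
  | [], [], X, X', γ, γ', h => by
      simp only [List.map_nil, List.nil_append, List.cons.injEq] at h
      exact ⟨rfl, Sum.inl.inj h.1, h.2⟩
  | [], a :: w', X, X', γ, γ', h => by
      simp only [List.map_nil, List.nil_append, List.map_cons, List.cons_append,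
        List.cons.injEq] at h
      exact absurd h.1 (by simp)
  | a :: w, [], X, X', γ, γ', h => by
      simp only [List.map_nil, List.nil_append, List.map_cons, List.cons_append,
        List.cons.injEq] at h
      exact absurd h.1 (by simp)
  | a :: w, a' :: w', X, X', γ, γ', h => by
      simp only [List.map_cons, List.cons_append, List.cons.injEq] at h
      obtain ⟨h1, h2⟩ := h
      obtain ⟨hw, hX, hγ⟩ := decomp_unique w w' X X' γ γ' h2
      exact ⟨by rw [Sum.inr.inj h1, hw], hX, hγ⟩

lemma exists_decomp : ∀ β : SF N T, ¬ IsTerminalSF β →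
    ∃ (w : List T) (X : N) (γ : SF N T), β = w.map Sum.inr ++ Sum.inl X :: γ
  | [], h => absurd (fun s hs => absurd hs List.not_mem_nil) h
  | Sum.inl X :: rest, _ => ⟨[], X, rest, rfl⟩
  | Sum.inr a :: rest, h => by
      have h' : ¬ IsTerminalSF rest := by
        intro ht; exact h (by
          intro s hs
          rcases List.mem_cons.mp hs with rfl | hs
          · exact ⟨a, rfl⟩
          · exact ht s hs)
      obtain ⟨w, X, γ, hw⟩ := exists_decomp rest h'
      exact ⟨a :: w, X, γ, by simp [hw]⟩

end Aux3
section Aux4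
open Classical

variable {N T B : Type} [Mul B] [One B] (G : GameGrammar N T) (boxT : T → B)

lemma inl_mem_terminal_append (w : List T) (l : SF N T) (Y : N) :
    Sum.inl Y ∈ w.map Sum.inr ++ l ↔ Sum.inl Y ∈ l := by
  simp [List.mem_append]

lemma symLevel_inl (X : N) : symLevel G boxT (Sum.inl X) = attrLevel G boxT X := rfl

lemma level_drop (c : ℕ) (w : List T) (X : N) (γ η : SF N T)
    (hlt : sfLevel G boxT c η < c ^ attrLevel G boxT X) :
    sfLevel G boxT c (w.map Sum.inr ++ (η ++ γ)) <
      sfLevel G boxT c (w.map Sum.inr ++ Sum.inl X :: γ) := by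
  rw [sfLevel_append, sfLevel_append, sfLevel_append, sfLevel_cons, symLevel_inl]
  omega

/-- Refuter's choice of rule for a non-terminal. -/
noncomputable def chooseRule (c i₀ : ℕ) (X : N) : List (N ⊕ T) :=
  @dite _ (∃ η ∈ G.rules X,
      (∀ Y : N, Sum.inl Y ∈ η → ok (approx G boxT i₀ Y)) ∧
        sfLevel G boxT c η < c ^ attrLevel G boxT X) (Classical.propDecidable _)
    (fun h2 => h2.choose)
    (fun _ => (G.rules X).head (G.rules_nonempty X))

lemma chooseRule_mem (c i₀ : ℕ) (X : N) : chooseRule G boxT c i₀ X ∈ G.rules X := by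
  rw [chooseRule]
  split
  next h2 => exact h2.choose_spec.1
  next => exact List.head_mem _

lemma chooseRule_spec (c i₀ : ℕ) (X : N)
    (h2 : ∃ η ∈ G.rules X,
      (∀ Y : N, Sum.inl Y ∈ η → ok (approx G boxT i₀ Y)) ∧
        sfLevel G boxT c η < c ^ attrLevel G boxT X) :
    (∀ Y : N, Sum.inl Y ∈ chooseRule G boxT c i₀ X → ok (approx G boxT i₀ Y)) ∧
      sfLevel G boxT c (chooseRule G boxT c i₀ X) < c ^ attrLevel G boxT X := by
  rw [chooseRule, dif_pos h2]
  exact h2.choose_spec.2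

/-- Refuter's positional move. -/
noncomputable def moveFn (c i₀ : ℕ) (β : SF N T) : SF N T :=
  if h : ∃ (w : List T) (X : N) (γ : SF N T), β = w.map Sum.inr ++ Sum.inl X :: γ then
    (h.choose.map Sum.inr) ++
      (chooseRule G boxT c i₀ h.choose_spec.choose ++ h.choose_spec.choose_spec.choose)
  else β

lemma moveFn_eq (c i₀ : ℕ) (w : List T) (X : N) (γ : SF N T) :
    moveFn G boxT c i₀ (w.map Sum.inr ++ Sum.inl X :: γ)
      = w.map Sum.inr ++ (chooseRule G boxT c i₀ X ++ γ) := by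
  have h : ∃ (w' : List T) (X' : N) (γ' : SF N T),
      w.map Sum.inr ++ Sum.inl X :: γ = w'.map Sum.inr ++ Sum.inl X' :: γ' := ⟨w, X, γ, rfl⟩
  obtain ⟨hw, hX, hγ⟩ := decomp_unique w h.choose X h.choose_spec.choose γ
    h.choose_spec.choose_spec.choose h.choose_spec.choose_spec.choose_spec
  rw [moveFn, dif_pos h]
  have key : ∀ (w'' : List T) (X'' : N) (γ'' : SF N T), w'' = w → X'' = X → γ'' = γ →
      w''.map Sum.inr ++ (chooseRule G boxT c i₀ X'' ++ γ'')
        = w.map Sum.inr ++ (chooseRule G boxT c i₀ X ++ γ) := by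
    rintro _ _ _ rfl rfl rfl; rfl
  exact key _ _ _ hw.symm hX.symm hγ.symm

lemma move_derives (c i₀ : ℕ) (w : List T) (X : N) (γ : SF N T) :
    Derives G (w.map Sum.inr ++ Sum.inl X :: γ)
      (moveFn G boxT c i₀ (w.map Sum.inr ++ Sum.inl X :: γ)) := by
  rw [moveFn_eq]
  exact ⟨w, X, _, γ, rfl, chooseRule_mem G boxT c i₀ X, rfl⟩

lemma move_progress (c i₀ : ℕ)
    (hc : ∀ (X : N) (η : List (N ⊕ T)), η ∈ G.rules X → η.length < c)
    (w : List T) (X : N) (γ : SF N T)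
    (hβ : ok (interpSF boxT (approx G boxT i₀) (w.map Sum.inr ++ Sum.inl X :: γ)))
    (hp : G.prover X = false) :
    ok (interpSF boxT (approx G boxT i₀)
        (moveFn G boxT c i₀ (w.map Sum.inr ++ Sum.inl X :: γ))) ∧
    sfLevel G boxT c (moveFn G boxT c i₀ (w.map Sum.inr ++ Sum.inl X :: γ)) <
      sfLevel G boxT c (w.map Sum.inr ++ Sum.inl X :: γ) := by
  rw [moveFn_eq]
  have hXok : ok (approx G boxT i₀ X) := by
    rw [ok_interp] at hβ
    exact hβ _ (by rw [inl_mem_terminal_append]; exact List.mem_cons_self)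
  have h2 := (key_lemma G boxT c i₀ hc hXok).2 hp
  obtain ⟨hηok, hηlt⟩ := chooseRule_spec G boxT c i₀ _ h2
  constructor
  · rw [ok_interp]
    intro Y hY
    rw [inl_mem_terminal_append, List.mem_append] at hY
    rcases hY with hY | hY
    · exact hηok Y hY
    · rw [ok_interp] at hβ
      exact hβ Y (by rw [inl_mem_terminal_append]; exact List.mem_cons_of_mem _ hY)
  · exact level_drop G boxT c _ _ _ _ hηlt

end Aux4
section Main

variable {N T B : Type} [Mul B] [One B] (G : GameGrammar N T) (boxT : T → B)

lemma step_lemma (c i₀ : ℕ)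
    (hc : ∀ (X : N) (η : List (N ⊕ T)), η ∈ G.rules X → η.length < c)
    (α β : SF N T) (hok : ok (interpSF boxT (approx G boxT i₀) α))
    (hd : Derives G α β)
    (hconf : ¬ ProverTurn G α → β = moveFn G boxT c i₀ α) :
    ok (interpSF boxT (approx G boxT i₀) β) ∧
      sfLevel G boxT c β < sfLevel G boxT c α := by
  obtain ⟨w, X, η, γ, rfl, hη, rfl⟩ := hd
  cases hp : G.prover X with
  | true =>
    have hXok : ok (approx G boxT i₀ X) := by
      rw [ok_interp] at hok
      exact hok _ (by rw [inl_mem_terminal_append]; exact List.mem_cons_self)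
    obtain ⟨hηok, hηlt⟩ := (key_lemma G boxT c i₀ hc hXok).1 hp η hη
    constructor
    · rw [ok_interp]
      intro Y hY
      rw [inl_mem_terminal_append, List.mem_append] at hY
      rcases hY with hY | hY
      · exact hηok Y hY
      · rw [ok_interp] at hok
        exact hok Y (by rw [inl_mem_terminal_append]; exact List.mem_cons_of_mem _ hY)
    · exact level_drop G boxT c _ _ _ _ hηlt
  | false =>
    have hnp : ¬ ProverTurn G (w.map Sum.inr ++ Sum.inl X :: γ) := by
      rintro ⟨w', X', γ', heq, hp'⟩
      obtain ⟨-, rfl, -⟩ := decomp_unique w w' X X' γ γ' heq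
      rw [hp'] at hp; exact Bool.noConfusion hp
    rw [hconf hnp]
    exact move_progress G boxT c i₀ hc w X γ hok hp

end Main

/-- From any position `wXβ` whose fixed-point formula is satisfiable, every
prover move strictly decreases the level, and some refuter move strictly
decreases the level; hence refuter has a strategy (playing legal moves at her
turns) such that all conforming plays are finite. -/
theorem refuter_forces_termination [Mul B] [One B] (G : GameGrammar N T)
    (boxT : T → B) (c i₀ : ℕ)
    (hc : ∀ (X : N) (η : List (N ⊕ T)), η ∈ G.rules X → η.length < c)
    (hstab : ∀ k, i₀ ≤ k → ∀ X : N,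
      Formula.Equiv (approx G boxT k X) (approx G boxT i₀ X)) :
    (∀ (w : List T) (X : N) (β : SF N T),
      ¬ Formula.Equiv
          (interpSF boxT (approx G boxT i₀) (w.map Sum.inr ++ Sum.inl X :: β))
          Formula.fls →
      ((G.prover X = true → ∀ η ∈ G.rules X,
          sfLevel G boxT c (w.map Sum.inr ++ (η ++ β)) <
            sfLevel G boxT c (w.map Sum.inr ++ Sum.inl X :: β)) ∧
       (G.prover X = false → ∃ η ∈ G.rules X,
          sfLevel G boxT c (w.map Sum.inr ++ (η ++ β)) <
            sfLevel G boxT c (w.map Sum.inr ++ Sum.inl X :: β)))) ∧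
    (∀ α : SF N T,
      ¬ Formula.Equiv (interpSF boxT (approx G boxT i₀) α) Formula.fls →
      ∃ s : List (SF N T) → SF N T,
        (∀ p : List (SF N T), IsPlay G α p →
          Conforms (fun x => ¬ ProverTurn G x) s p →
          ¬ ProverTurn G p.getLast! → ¬ IsTerminalSF p.getLast! →
          Derives G p.getLast! (s p)) ∧
        (∀ f : ℕ → SF N T, f 0 = α → (∀ i, Derives G (f i) (f (i + 1))) →
          ¬ (∀ i, ¬ ProverTurn G (f i) →
              f (i + 1) = s ((List.range (i + 1)).map f)))) := by
  constructor
  · intro w X β hne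
    have hok := not_equiv_fls.mp hne
    have hXok : ok (approx G boxT i₀ X) := by
      rw [ok_interp] at hok
      exact hok _ (by rw [inl_mem_terminal_append]; exact List.mem_cons_self)
    constructor
    · intro hp η hη
      obtain ⟨-, hηlt⟩ := (key_lemma G boxT c i₀ hc hXok).1 hp η hη
      exact level_drop G boxT c w X β η hηlt
    · intro hp
      obtain ⟨η, hη, -, hηlt⟩ := (key_lemma G boxT c i₀ hc hXok).2 hp
      exact ⟨η, hη, level_drop G boxT c w X β η hηlt⟩
  · intro α hne
    refine ⟨fun p => moveFn G boxT c i₀ p.getLast!, ?_, ?_⟩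
    · intro p _ _ _ hterm
      obtain ⟨w, X, γ, hdec⟩ := exists_decomp p.getLast! hterm
      simp only [hdec]
      exact move_derives G boxT c i₀ w X γ
    · intro f hf0 hder hconf
      have hlast : ∀ i : ℕ, ((List.range (i + 1)).map f).getLast! = f i := by
        intro i
        apply List.getLast!_of_getLast?
        rw [List.range_succ, List.map_append]
        exact List.getLast?_concat
      have hstep : ∀ i, ok (interpSF boxT (approx G boxT i₀) (f i)) →
          ok (interpSF boxT (approx G boxT i₀) (f (i + 1))) ∧
            sfLevel G boxT c (f (i + 1)) < sfLevel G boxT c (f i) := by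
        intro i hok
        apply step_lemma G boxT c i₀ hc _ _ hok (hder i)
        intro hnp
        rw [hconf i hnp]
        simp only [hlast i]
      have hokall : ∀ i, ok (interpSF boxT (approx G boxT i₀) (f i)) := by
        intro i
        induction i with
        | zero => rw [hf0]; exact not_equiv_fls.mp hne
        | succ i ih => exact (hstep i ih).1
      have hdecr : ∀ i, sfLevel G boxT c (f (i + 1)) < sfLevel G boxT c (f i) :=
        fun i => (hstep i (hokall i)).2
      have hbound : ∀ i, sfLevel G boxT c (f i) + i ≤ sfLevel G boxT c (f 0) := by
        intro i
        induction i with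
        | zero => omega
        | succ i ih => have := hdecr i; omega
      have := hbound (sfLevel G boxT c (f 0) + 1)
      omega
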